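/- Let (t_n)_{n≥0} be real numbers satisfying t_{n+1} = a·t_n - t_{n-1} where |a| = 2, and suppose for every j ≥ 1 the sign condition sgn(a · t_{j-1} · t_j) = +1 holds together with the Fricke–Vogt relation a² + t_{j-1}² + t_j² - a·t_{j-1}·t_j = 4 + V² for V > 0, and |t_j| > |t_{j-1}| > 0 for all j ≥ 1. Then |t_n| - |t_0| = n·V for all n ≥ 0. -/
import Mathlib


/-- Let `(t_n)_{n≥0}` be real numbers satisfying
`t_{n+1} = a·t_n - t_{n-1}` where `|a| = 2`, and suppose for every `j ≥ 1` the sign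
condition `sgn(a · t_{j-1} · t_j) = +1` holds together with the Fricke–Vogt relation
`a² + t_{j-1}² + t_j² - a·t_{j-1}·t_j = 4 + V²` for `V > 0`, and
`|t_j| > |t_{j-1}| > 0` for all `j ≥ 1`. Then `|t_n| - |t_0| = n·V` for all `n ≥ 0`. -/
theorem trace_growth_linear
    (a V : ℝ) (ha : |a| = 2) (hV : 0 < V) (t : ℕ → ℝ)
    (hrec : ∀ n : ℕ, t (n + 2) = a * t (n + 1) - t n)
    (hsign : ∀ j : ℕ, Real.sign (a * t j * t (j + 1)) = 1)
    (hFV : ∀ j : ℕ,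
      a ^ 2 + t j ^ 2 + t (j + 1) ^ 2 - a * t j * t (j + 1) = 4 + V ^ 2)
    (hmono : ∀ j : ℕ, |t (j + 1)| > |t j| ∧ |t j| > 0) :
    ∀ n : ℕ, |t n| - |t 0| = n * V := by
  have key : ∀ j : ℕ, |t (j + 1)| - |t j| = V := by
    intro j
    have hpos : 0 < a * t j * t (j + 1) := by
      rcases lt_trichotomy (a * t j * t (j + 1)) 0 with h | h | h
      · have := Real.sign_of_neg h; rw [hsign j] at this; norm_num at this
      · have := hsign j; rw [h, Real.sign_zero] at this; norm_num at this
      · exact h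
    have habs : a * t j * t (j + 1) = 2 * |t j| * |t (j + 1)| := by
      have := abs_of_pos hpos
      rw [abs_mul, abs_mul, ha] at this
      linarith
    have ha2 : a ^ 2 = 4 := by
      rw [← sq_abs a, ha]; norm_num
    have h2 := hFV j
    have hsq : (|t (j + 1)| - |t j|) ^ 2 = V ^ 2 := by
      have h3 : |t j| ^ 2 = t j ^ 2 := sq_abs _
      have h4 : |t (j + 1)| ^ 2 = t (j + 1) ^ 2 := sq_abs _
      nlinarith [h2, habs, ha2]
    have hm := hmono j
    have hge : 0 < |t (j + 1)| - |t j| := by linarith [hm.1]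
    have hfac : (|t (j + 1)| - |t j| - V) * (|t (j + 1)| - |t j| + V) = 0 := by
      linear_combination hsq
    rcases mul_eq_zero.mp hfac with h | h
    · linarith
    · linarith
  intro n
  induction n with
  | zero => simp
  | succ n ih =>
    have := key n
    push_cast
    linarith
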